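/- Let S and D be random variables on finite spaces. For each s let E_s be a measurable set with P(D ∈ E_s) ≤ α. Then P(D ∈ E_S) ≤ α + sqrt(I(S; D)/2), where I(S; D) is the mutual information of S and D in nats. -/

import Mathlib

open scoped BigOperators

/-- A probability vector on a finite space. -/
def IsProbVec {α : Type*} [Fintype α] (p : α → ℝ) : Prop :=
  (∀ x, 0 ≤ p x) ∧ ∑ x, p x = 1

/-- Marginal of the first coordinate. -/
noncomputable def margFst {α β : Type*} [Fintype β] (p : α × β → ℝ) (a : α) : ℝ :=
  ∑ b, p (a, b)

/-- Marginal of the second coordinate. -/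
noncomputable def margSnd {α β : Type*} [Fintype α] (p : α × β → ℝ) (b : β) : ℝ :=
  ∑ a, p (a, b)

/-- Mutual information (in nats), with the convention `0 log 0 = 0`. -/
noncomputable def mutInf {α β : Type*} [Fintype α] [Fintype β] (p : α × β → ℝ) : ℝ :=
  ∑ a, ∑ b, p (a, b) * Real.log (p (a, b) / (margFst p a * margSnd p b))


lemma log_sum_ineq {ι : Type*} (t : Finset ι) (p q : ι → ℝ)
    (hp : ∀ i ∈ t, 0 ≤ p i) (hq : ∀ i ∈ t, 0 ≤ q i)
    (habs : ∀ i ∈ t, q i = 0 → p i = 0) :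
    (∑ i ∈ t, p i) * Real.log ((∑ i ∈ t, p i) / (∑ i ∈ t, q i)) ≤
      ∑ i ∈ t, p i * Real.log (p i / q i) := by
  set P := ∑ i ∈ t, p i with hPdef
  set Q := ∑ i ∈ t, q i with hQdef
  rcases eq_or_lt_of_le (Finset.sum_nonneg hp) with hP | hP
  · have hz : ∀ i ∈ t, p i = 0 :=
      (Finset.sum_eq_zero_iff_of_nonneg hp).mp hP.symm
    have h1 : ∑ i ∈ t, p i * Real.log (p i / q i) = 0 :=
      Finset.sum_eq_zero fun i hi => by rw [hz i hi]; ring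
    have hP0 : P = 0 := hP.symm
    rw [h1, hP0]
    simp
  · have hQ : (0:ℝ) < Q := by
      rcases eq_or_lt_of_le (Finset.sum_nonneg hq) with h | h
      · exfalso
        have hz : ∀ i ∈ t, q i = 0 := (Finset.sum_eq_zero_iff_of_nonneg hq).mp h.symm
        have : P = 0 := Finset.sum_eq_zero fun i hi => habs i hi (hz i hi)
        linarith
      · exact h
    have key : ∀ i ∈ t,
        p i * Real.log (P / Q) + p i - q i * (P / Q) ≤ p i * Real.log (p i / q i) := by
      intro i hi
      rcases eq_or_lt_of_le (hp i hi) with h0 | h0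
      · rw [← h0]
        have : 0 ≤ q i * (P / Q) := mul_nonneg (hq i hi) (by positivity)
        linarith
      · have hqi : (0:ℝ) < q i :=
          lt_of_le_of_ne (hq i hi) fun h => by
            have := habs i hi h.symm; linarith
        have hlog : Real.log (q i * P / (p i * Q)) ≤ q i * P / (p i * Q) - 1 :=
          Real.log_le_sub_one_of_pos (by positivity)
        have e3 : Real.log (q i * P / (p i * Q))
            = (Real.log (q i) + Real.log P) - (Real.log (p i) + Real.log Q) := by
          rw [Real.log_div (by positivity) (by positivity),
            Real.log_mul hqi.ne' hP.ne', Real.log_mul h0.ne' hQ.ne']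
        have e1 : Real.log (p i / q i) = Real.log (p i) - Real.log (q i) :=
          Real.log_div h0.ne' hqi.ne'
        have e2 : Real.log (P / Q) = Real.log P - Real.log Q :=
          Real.log_div hP.ne' hQ.ne'
        have e4 : p i * (q i * P / (p i * Q)) = q i * (P / Q) := by
          field_simp
        have hmul := mul_le_mul_of_nonneg_left hlog h0.le
        rw [e3, mul_sub, mul_sub, e4, mul_one] at hmul
        rw [e1, e2]
        nlinarith [hmul]
    have hsum := Finset.sum_le_sum key
    have hexp : ∑ i ∈ t, (p i * Real.log (P / Q) + p i - q i * (P / Q))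
        = P * Real.log (P / Q) + P - Q * (P / Q) := by
      rw [Finset.sum_sub_distrib, Finset.sum_add_distrib, ← Finset.sum_mul, ← Finset.sum_mul]
    have : Q * (P / Q) = P := by field_simp
    rw [hexp, this] at hsum
    linarith

lemma pinsker_half (a b : ℝ) (hb : 0 < b) (hba : b ≤ a) (ha : a ≤ 1) :
    2 * (a - b) ^ 2 ≤ a * Real.log (a / b) + (1 - a) * Real.log ((1 - a) / (1 - b)) := by
  rcases eq_or_lt_of_le hba with rfl | hba'
  · rcases eq_or_lt_of_le ha with rfl | h
    · norm_num
    · rw [div_self hb.ne', div_self (by linarith : (1:ℝ) - b ≠ 0)]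
      simp
  have ha0 : 0 < a := lt_trans hb hba'
  rcases eq_or_lt_of_le ha with rfl | ha1
  · -- a = 1
    have h2 : ((1:ℝ) - 1) * Real.log ((1 - 1) / (1 - b)) = 0 := by norm_num
    rw [h2, one_mul, add_zero, Real.log_div one_ne_zero hb.ne', Real.log_one, zero_sub]
    set h : ℝ → ℝ := fun x => -Real.log x - 2 * (1 - x) ^ 2 with hh
    have hd : ∀ x ∈ Set.Ioo b 1, HasDerivAt h (-x⁻¹ - 2 * (2 * (1 - x) * (-1))) x := by
      intro x hx
      have hx0 : 0 < x := lt_trans hb hx.1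
      apply HasDerivAt.sub
      · exact (Real.hasDerivAt_log hx0.ne').neg
      · have h1 : HasDerivAt (fun x : ℝ => 1 - x) (-1) x := by
          simpa using (hasDerivAt_id x).const_sub 1
        simpa using (h1.pow 2).const_mul 2
    have hanti : AntitoneOn h (Set.Icc b 1) := by
      apply antitoneOn_of_deriv_nonpos (convex_Icc _ _)
      · apply ContinuousOn.sub
        · exact (Real.continuousOn_log.mono (by
            intro x hx; simp only [Set.mem_Icc] at hx
            simp only [Set.mem_compl_iff, Set.mem_singleton_iff]
            intro h; rw [h] at hx; linarith [hx.1])).neg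
        · fun_prop
      · intro x hx
        rw [interior_Icc] at hx
        exact ((hd x hx).differentiableAt).differentiableWithinAt
      · intro x hx
        rw [interior_Icc] at hx
        have hx0 : 0 < x := lt_trans hb hx.1
        rw [(hd x hx).deriv]
        have h1xne : x ≠ 0 := hx0.ne'
        have heq : -x⁻¹ - 2 * (2 * (1 - x) * (-1)) = (-(1 - 2*x)^2) / x := by
          field_simp; ring
        rw [heq]
        exact div_nonpos_of_nonpos_of_nonneg (by nlinarith [sq_nonneg (1 - 2*x)]) hx0.le
    have := hanti (Set.mem_Icc.mpr ⟨le_refl b, hba'.le⟩)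
      (Set.mem_Icc.mpr ⟨hba'.le, le_refl 1⟩) hba'.le
    simp only [hh] at this
    norm_num at this
    nlinarith [this]
  · -- a < 1
    have h1a : 0 < 1 - a := by linarith
    have h1b : 0 < 1 - b := by linarith
    set g : ℝ → ℝ := fun x => a * (Real.log a - Real.log x)
        + (1 - a) * (Real.log (1 - a) - Real.log (1 - x)) - 2 * (a - x) ^ 2 with hg
    have hd : ∀ x ∈ Set.Ioo b a, HasDerivAt g
        (a * (0 - x⁻¹) + (1 - a) * (0 - (-(1 - x)⁻¹)) - 2 * (2 * (a - x) * (-1))) x := by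
      intro x hx
      have hx0 : 0 < x := lt_trans hb hx.1
      have hx1 : x < 1 := lt_trans hx.2 ha1
      have hlog1x : HasDerivAt (fun x : ℝ => Real.log (1 - x)) (-(1 - x)⁻¹) x := by
        have h1 : HasDerivAt (fun x : ℝ => 1 - x) (-1) x := by
          simpa using (hasDerivAt_id x).const_sub 1
        have := (Real.hasDerivAt_log (by linarith : (1:ℝ) - x ≠ 0)).comp x h1
        exact this.congr_deriv (by ring)
      apply HasDerivAt.sub
      apply HasDerivAt.add
      · exact ((hasDerivAt_const x (Real.log a)).sub (Real.hasDerivAt_log hx0.ne')).const_mul a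
      · exact ((hasDerivAt_const x (Real.log (1-a))).sub hlog1x).const_mul (1 - a)
      · have h1 : HasDerivAt (fun x : ℝ => a - x) (-1) x := by
          simpa using (hasDerivAt_id x).const_sub a
        simpa using (h1.pow 2).const_mul 2
    have hanti : AntitoneOn g (Set.Icc b a) := by
      apply antitoneOn_of_deriv_nonpos (convex_Icc _ _)
      · apply ContinuousOn.sub
        apply ContinuousOn.add
        · apply ContinuousOn.mul continuousOn_const
          apply ContinuousOn.sub continuousOn_const
          exact Real.continuousOn_log.mono (by
            intro x hx; simp only [Set.mem_Icc] at hx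
            simp only [Set.mem_compl_iff, Set.mem_singleton_iff]
            intro h; rw [h] at hx; linarith [hx.1])
        · apply ContinuousOn.mul continuousOn_const
          apply ContinuousOn.sub continuousOn_const
          apply Real.continuousOn_log.comp (by fun_prop : ContinuousOn (fun x : ℝ => 1 - x) (Set.Icc b a))
          intro x hx
          simp only [Set.mem_Icc] at hx
          simp only [Set.mem_compl_iff, Set.mem_singleton_iff]
          intro h; nlinarith [hx.2]
        · fun_prop
      · intro x hx
        rw [interior_Icc] at hx
        exact ((hd x hx).differentiableAt).differentiableWithinAt
      · intro x hx
        rw [interior_Icc] at hx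
        have hx0 : 0 < x := lt_trans hb hx.1
        have hx1 : x < 1 := lt_trans hx.2 ha1
        rw [(hd x hx).deriv]
        have hxne : x ≠ 0 := hx0.ne'
        have h1xne : (1:ℝ) - x ≠ 0 := by linarith
        have heq : a * (0 - x⁻¹) + (1 - a) * (0 - (-(1 - x)⁻¹)) - 2 * (2 * (a - x) * (-1))
            = (-(a - x) * (1 - 2*x)^2) / (x * (1 - x)) := by
          field_simp
          ring
        rw [heq]
        apply div_nonpos_of_nonpos_of_nonneg
        · nlinarith [sq_nonneg (1 - 2*x), hx.2]
        · exact mul_nonneg hx0.le (by linarith)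
    have hab := hanti (Set.mem_Icc.mpr ⟨le_refl b, hba'.le⟩)
      (Set.mem_Icc.mpr ⟨hba'.le, le_refl a⟩) hba'.le
    simp only [hg] at hab
    have hga : a * (Real.log a - Real.log a) + (1 - a) * (Real.log (1 - a) - Real.log (1 - a))
        - 2 * (a - a) ^ 2 = 0 := by ring
    rw [hga] at hab
    rw [Real.log_div ha0.ne' hb.ne', Real.log_div h1a.ne' h1b.ne']
    nlinarith [hab]

/-- Selected-target coverage bound via mutual information:
if `P(D ∈ E_s) ≤ α` for each fixed `s`, then
`P(D ∈ E_S) ≤ α + sqrt(I(S;D)/2)`. -/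
theorem selected_coverage_mutInf {𝒮 𝒟 : Type*} [Fintype 𝒮] [Fintype 𝒟]
    (p : 𝒮 × 𝒟 → ℝ) (hp : IsProbVec p) (E : 𝒮 → Finset 𝒟) (α : ℝ)
    (hcov : ∀ s, ∑ d ∈ E s, margSnd p d ≤ α) :
    ∑ s, ∑ d ∈ E s, p (s, d) ≤ α + Real.sqrt (mutInf p / 2) := by
  classical
  obtain ⟨hp0, hp1⟩ := hp
  set q : 𝒮 × 𝒟 → ℝ := fun x => margFst p x.1 * margSnd p x.2 with hqdef
  set A : Finset (𝒮 × 𝒟) := Finset.univ.filter (fun x => x.2 ∈ E x.1) with hAdef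
  have hAsum : ∀ f : 𝒮 × 𝒟 → ℝ, ∑ x ∈ A, f x = ∑ s, ∑ d ∈ E s, f (s, d) := by
    intro f
    rw [hAdef, Finset.sum_filter, Fintype.sum_prod_type]
    exact Finset.sum_congr rfl fun s _ => by
      simp [Finset.sum_ite_mem]
  have hmf0 : ∀ s, 0 ≤ margFst p s := fun s => Finset.sum_nonneg fun d _ => hp0 _
  have hms0 : ∀ d, 0 ≤ margSnd p d := fun d => Finset.sum_nonneg fun s _ => hp0 _
  have hmf1 : ∑ s, margFst p s = 1 := by
    simp only [margFst]; rw [← Fintype.sum_prod_type]; exact hp1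
  have hms1 : ∑ d, margSnd p d = 1 := by
    simp only [margSnd]; rw [← Fintype.sum_prod_type_right]; exact hp1
  have hq0 : ∀ x, 0 ≤ q x := fun x => mul_nonneg (hmf0 _) (hms0 _)
  have habs : ∀ x, q x = 0 → p x = 0 := by
    rintro ⟨s, d⟩ hx
    rcases mul_eq_zero.mp hx with h | h
    · simp only [margFst] at h
      exact (Finset.sum_eq_zero_iff_of_nonneg fun b _ => hp0 _).mp h d (Finset.mem_univ d)
    · simp only [margSnd] at h
      exact (Finset.sum_eq_zero_iff_of_nonneg fun s' _ => hp0 _).mp h s (Finset.mem_univ s)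
  have hq1 : ∑ x, q x = 1 := by
    rw [Fintype.sum_prod_type]
    simp only [hqdef]
    rw [← Finset.sum_mul_sum, hmf1, hms1, one_mul]
  set a : ℝ := ∑ x ∈ A, p x with hadef
  set b : ℝ := ∑ x ∈ A, q x with hbdef
  have ha0 : 0 ≤ a := Finset.sum_nonneg fun x _ => hp0 x
  have hb0 : 0 ≤ b := Finset.sum_nonneg fun x _ => hq0 x
  have hacompl : ∑ x ∈ Aᶜ, p x = 1 - a := by
    have := Finset.sum_add_sum_compl A p
    rw [hp1] at this; linarith
  have hbcompl : ∑ x ∈ Aᶜ, q x = 1 - b := by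
    have := Finset.sum_add_sum_compl A q
    rw [hq1] at this; linarith
  have ha1 : a ≤ 1 := by
    have h := Finset.sum_nonneg (fun x (_ : x ∈ Aᶜ) => hp0 x)
    rw [hacompl] at h; linarith
  have hb1 : b ≤ 1 := by
    have h := Finset.sum_nonneg (fun x (_ : x ∈ Aᶜ) => hq0 x)
    rw [hbcompl] at h; linarith
  have hbα : b ≤ α := by
    have hbe : b = ∑ s, margFst p s * ∑ d ∈ E s, margSnd p d := by
      rw [hbdef, hAsum q]
      simp only [hqdef]
      exact Finset.sum_congr rfl fun s _ => (Finset.mul_sum _ _ _).symm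
    calc b ≤ ∑ s, margFst p s * α := by
            rw [hbe]
            exact Finset.sum_le_sum fun s _ =>
              mul_le_mul_of_nonneg_left (hcov s) (hmf0 s)
      _ = α := by rw [← Finset.sum_mul, hmf1, one_mul]
  have hgoal : ∑ s, ∑ d ∈ E s, p (s, d) = a := (hAsum p).symm
  rw [hgoal]
  by_cases hab : a ≤ b
  · have := Real.sqrt_nonneg (mutInf p / 2)
    linarith
  push_neg at hab
  have hbpos : 0 < b := by
    rcases eq_or_lt_of_le hb0 with h | h
    · exfalso
      have hz : ∀ x ∈ A, q x = 0 := (Finset.sum_eq_zero_iff_of_nonneg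
        fun x _ => hq0 x).mp h.symm
      have : a = 0 := Finset.sum_eq_zero fun x hx => habs x (hz x hx)
      rw [this] at hab; linarith
    · exact h
  have hKL : ∑ x ∈ A, p x * Real.log (p x / q x)
      + ∑ x ∈ Aᶜ, p x * Real.log (p x / q x) = mutInf p := by
    rw [Finset.sum_add_sum_compl, Fintype.sum_prod_type]
    rfl
  have h1 := log_sum_ineq A p q (fun x _ => hp0 x) (fun x _ => hq0 x)
    (fun x _ h => habs x h)
  have h2 := log_sum_ineq Aᶜ p q (fun x _ => hp0 x) (fun x _ => hq0 x)
    (fun x _ h => habs x h)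
  rw [hacompl, hbcompl] at h2
  have hpk := pinsker_half a b hbpos hab.le ha1
  have hKLge : 2 * (a - b) ^ 2 ≤ mutInf p := by
    rw [← hKL]
    calc 2 * (a - b) ^ 2
        ≤ a * Real.log (a / b) + (1 - a) * Real.log ((1 - a) / (1 - b)) := hpk
      _ ≤ _ := add_le_add h1 h2
  have h6 : a - b ≤ Real.sqrt (mutInf p / 2) := by
    calc a - b = Real.sqrt ((a - b) ^ 2) := (Real.sqrt_sq (by linarith)).symm
      _ ≤ Real.sqrt (mutInf p / 2) := Real.sqrt_le_sqrt (by linarith)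
  linarith
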